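/- Let 𝔧 be a strongly stable ideal in R and m a positive integer such that no monomial of degree m+1 in the minimal basis B_𝔧 is divisible by x_1. If 𝔊 is a [𝔧,m]-marked basis, then for every monomial x^β the normal form Nf(x^β) has support contained in N(𝔧)_{≤ max{m−1, |β|}}. Consequently, a [𝔧,m]-marked set 𝔊 is a [𝔧,m]-marked basis if and only if it is a [𝔧,m−1]-marked basis. -/

import Mathlib

open MvPolynomial

namespace Paper

/-- Monomials (exponent vectors) in `N` variables. -/
abbrev Mon (N : ℕ) := Fin N →₀ ℕ

variable {N : ℕ}

/-- Total degree of a monomial. -/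
def mdeg (u : Mon N) : ℕ := u.sum fun _ e => e

/-- `BorelStep a b` : `b` is obtained from `a` by one increasing elementary move,
i.e. `x^a · x_j = x^b · x_i` with `i < j`. -/
def BorelStep (a b : Mon N) : Prop :=
  ∃ i j : Fin N, i < j ∧ a + Finsupp.single j 1 = b + Finsupp.single i 1

/-- `BorelLt a b` : `a <_B b`, i.e. `b` is obtained from `a` by a nonempty
sequence of increasing elementary moves. -/
def BorelLt (a b : Mon N) : Prop := Relation.TransGen BorelStep a b

/-- A (combinatorially encoded) monomial ideal: a set of monomials closed
under multiplication by monomials. -/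
def MonIdeal (J : Set (Mon N)) : Prop := ∀ u ∈ J, ∀ d : Mon N, u + d ∈ J

/-- A strongly stable monomial ideal. -/
def StronglyStable (J : Set (Mon N)) : Prop :=
  MonIdeal J ∧ ∀ b ∈ J, ∀ a, BorelLt b a → a ∈ J

/-- The minimal monomial basis `B_J` of a monomial ideal. -/
def MinBasis (J : Set (Mon N)) : Set (Mon N) :=
  {u | u ∈ J ∧ ∀ v ∈ J, v ≤ u → v = u}

/-- `min(x^a) ≥ max(x^h)`. -/
def StarCond (a h : Mon N) : Prop :=
  ∀ i j : Fin N, a i ≠ 0 → h j ≠ 0 → j ≤ i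


variable (K : Type) [Field K]

/-- The monomial `x^u` as a polynomial. -/
noncomputable def mono {N : ℕ} (u : Mon N) : MvPolynomial (Fin N) K :=
  MvPolynomial.monomial u (1 : K)

/-- The (actual) monomial ideal of `S` spanned by a set of monomials. -/
noncomputable def idealOf {N : ℕ} (J : Set (Mon N)) : Ideal (MvPolynomial (Fin N) K) :=
  Ideal.span (mono K '' J)

/-- The irrelevant maximal ideal `(x_0, …, x_n)`. -/
noncomputable def irrel (N : ℕ) : Ideal (MvPolynomial (Fin N) K) :=
  Ideal.span (Set.range MvPolynomial.X)

/-- The saturation `I^sat = ⋃_j (I : (x_0,…,x_n)^j)`. -/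
noncomputable def satIdeal {N : ℕ} (I : Ideal (MvPolynomial (Fin N) K)) :
    Ideal (MvPolynomial (Fin N) K) :=
  ⨆ k : ℕ, Submodule.colon I ((irrel K N ^ k : Ideal (MvPolynomial (Fin N) K)) : Set (MvPolynomial (Fin N) K))

/-- The satiety of a homogeneous ideal: the smallest `m` such that
`I_t = (I^sat)_t` for all `t ≥ m`. -/
noncomputable def satiety {N : ℕ} (I : Ideal (MvPolynomial (Fin N) K)) : ℕ :=
  sInf {m | ∀ t, m ≤ t → ∀ p : MvPolynomial (Fin N) K,
    p.IsHomogeneous t → (p ∈ I ↔ p ∈ satIdeal K I)}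

/-- The saturation of a combinatorial monomial ideal. -/
def msat {N : ℕ} (J : Set (Mon N)) : Set (Mon N) :=
  {u | ∃ k : ℕ, ∀ d : Mon N, mdeg d = k → u + d ∈ J}

/-- The satiety of a combinatorial monomial ideal. -/
noncomputable def msatiety {N : ℕ} (J : Set (Mon N)) : ℕ :=
  sInf {m | ∀ u : Mon N, m ≤ mdeg u → (u ∈ J ↔ u ∈ msat J)}

/-- A non-homogeneous `𝔧`-marked set: marked polynomials `f_α` with pairwise
distinct head terms forming `B_𝔧` and tails supported outside `𝔧`. -/
def NHMarkedSet {N : ℕ} (𝔧 : Set (Mon N)) (f : Mon N → MvPolynomial (Fin N) K) : Prop :=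
  ∀ α ∈ MinBasis 𝔧,
    MvPolynomial.coeff α (f α) = 1 ∧
    ∀ u ∈ (f α).support, u ≠ α → u ∉ 𝔧

/-- One step of the `𝔊_∗`-reduction: the monomial `x^γ = x^α ∗_𝔧 x^η` of the
support of `g` is replaced by `x^η · T(f_α)`. -/
def RStep {N : ℕ} (𝔧 : Set (Mon N)) (f : Mon N → MvPolynomial (Fin N) K)
    (g g₁ : MvPolynomial (Fin N) K) : Prop :=
  ∃ γ α η : Mon N, γ ∈ g.support ∧ γ ∈ 𝔧 ∧ α ∈ MinBasis 𝔧 ∧ γ = α + η ∧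
    StarCond α η ∧
    g₁ = g - MvPolynomial.coeff γ g • (mono K η * f α)

/-- The `𝔊_∗`-reduction relation (reflexive-transitive closure of `RStep`). -/
def Reduces {N : ℕ} (𝔧 : Set (Mon N)) (f : Mon N → MvPolynomial (Fin N) K) :
    MvPolynomial (Fin N) K → MvPolynomial (Fin N) K → Prop :=
  Relation.ReflTransGen (RStep K 𝔧 f)

/-- `g` is reduced: `supp(g) ∩ 𝔧 = ∅`. -/
def IsReducedPoly {N : ℕ} (𝔧 : Set (Mon N)) (g : MvPolynomial (Fin N) K) : Prop :=
  ∀ u ∈ g.support, u ∉ 𝔧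

/-- A `[𝔧,m]`-marked set: a n.h. `𝔧`-marked set whose tails are supported in
`N(𝔧)_{≤ max{m,|α|}}`. -/
def JmMarkedSet {N : ℕ} (𝔧 : Set (Mon N)) (m : ℕ)
    (f : Mon N → MvPolynomial (Fin N) K) : Prop :=
  ∀ α ∈ MinBasis 𝔧,
    MvPolynomial.coeff α (f α) = 1 ∧
    ∀ u ∈ (f α).support, u ≠ α → (u ∉ 𝔧 ∧ mdeg u ≤ max m (mdeg α))

/-- The ideal `(𝔊)` generated by a marked set. -/
noncomputable def idealG {N : ℕ} (𝔧 : Set (Mon N))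
    (f : Mon N → MvPolynomial (Fin N) K) : Ideal (MvPolynomial (Fin N) K) :=
  Ideal.span (f '' MinBasis 𝔧)

/-- A `[𝔧,m]`-completion of `𝔊`: marked polynomials `f_β ∈ (𝔊)` with pairwise
distinct head terms the monomials of `𝔧_{≤m} \ B_𝔧` and tails in `N(𝔧)_{≤m}`. -/
def IsCompletion {N : ℕ} (𝔧 : Set (Mon N)) (m : ℕ)
    (f h : Mon N → MvPolynomial (Fin N) K) : Prop :=
  ∀ β : Mon N, β ∈ 𝔧 → mdeg β ≤ m → β ∉ MinBasis 𝔧 →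
    h β ∈ idealG K 𝔧 f ∧
    MvPolynomial.coeff β (h β) = 1 ∧
    ∀ u ∈ (h β).support, u ≠ β → (u ∉ 𝔧 ∧ mdeg u ≤ m)

/-- `g'` is a `[𝔧,m]`-reduced form of `g` modulo `(𝔊)`. -/
def IsReducedForm {N : ℕ} (𝔧 : Set (Mon N)) (m : ℕ)
    (f : Mon N → MvPolynomial (Fin N) K)
    (g g' : MvPolynomial (Fin N) K) : Prop :=
  (∀ u ∈ g'.support, u ∉ 𝔧 ∧ mdeg u ≤ max m g.totalDegree) ∧
  g - g' ∈ idealG K 𝔧 f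

/-- `R_{≤ t}`: the `K`-subspace of polynomials of degree at most `t`. -/
noncomputable def degLE (N : ℕ) (t : ℕ) : Submodule K (MvPolynomial (Fin N) K) where
  carrier := {g | ∀ u ∈ g.support, mdeg u ≤ t}
  zero_mem' := by simp
  add_mem' := by
    intro a b ha hb u hu
    rcases Finset.mem_union.mp (MvPolynomial.support_add hu) with h | h
    · exact ha u h
    · exact hb u h
  smul_mem' := by
    intro c a ha u hu
    exact ha u (MvPolynomial.support_smul hu)

/-- `⟨N(𝔧)_{≤t}⟩`: the `K`-span of the monomials outside `𝔧` of degree `≤ t`. -/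
noncomputable def spanNLE {N : ℕ} (𝔧 : Set (Mon N)) (t : ℕ) :
    Submodule K (MvPolynomial (Fin N) K) :=
  Submodule.span K (mono K '' {u : Mon N | u ∉ 𝔧 ∧ mdeg u ≤ t})

/-- `(𝔊)_{≤t}`: the `K`-subspace of elements of `(𝔊)` of degree `≤ t`. -/
noncomputable def GleSub {N : ℕ} (𝔧 : Set (Mon N))
    (f : Mon N → MvPolynomial (Fin N) K) (t : ℕ) :
    Submodule K (MvPolynomial (Fin N) K) :=
  (idealG K 𝔧 f).restrictScalars K ⊓ degLE K N t

/-- A `[𝔧,m]`-marked basis: a `[𝔧,m]`-marked set with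
`R_{≤t} = ⟨N(𝔧)_{≤t}⟩ ⊕ (𝔊)_{≤t}` for all `t ≥ m`. -/
def JmMarkedBasis {N : ℕ} (𝔧 : Set (Mon N)) (m : ℕ)
    (f : Mon N → MvPolynomial (Fin N) K) : Prop :=
  JmMarkedSet K 𝔧 m f ∧
  ∀ t, m ≤ t →
    Disjoint (spanNLE K 𝔧 t) (GleSub K 𝔧 f t) ∧
    spanNLE K 𝔧 t ⊔ GleSub K 𝔧 f t = degLE K N t

lemma mdeg_eq_sum (u : Mon N) : mdeg u = ∑ i, u i :=
  Finsupp.sum_fintype u _ (fun _ => rfl)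
lemma mdeg_add (u v : Mon N) : mdeg (u + v) = mdeg u + mdeg v := by
  simp [mdeg_eq_sum, Finsupp.add_apply, Finset.sum_add_distrib]
lemma mdeg_single (j : Fin N) : mdeg (Finsupp.single j 1) = 1 := by
  simp [mdeg, Finsupp.sum_single_index]
lemma mdeg_mono {u v : Mon N} (h : u ≤ v) : mdeg u ≤ mdeg v := by
  rw [mdeg_eq_sum, mdeg_eq_sum]; exact Finset.sum_le_sum (fun i _ => h i)
lemma mdeg_lt_of_lt {u v : Mon N} (h : u ≤ v) (hne : u ≠ v) : mdeg u < mdeg v := by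
  rw [mdeg_eq_sum, mdeg_eq_sum]
  obtain ⟨i, hi⟩ : ∃ i, u i ≠ v i := by
    by_contra hc; push_neg at hc; exact hne (Finsupp.ext hc)
  exact Finset.sum_lt_sum (fun i _ => h i) ⟨i, Finset.mem_univ i, lt_of_le_of_ne (h i) hi⟩
lemma upward {J : Set (Mon N)} (hJ : MonIdeal J)
    {u v : Mon N} (hu : u ∈ J) (h : u ≤ v) : v ∈ J := by
  have := hJ u hu (v - u); rwa [add_tsub_cancel_of_le h] at this

lemma exists_minBasis_le {J : Set (Mon N)} (hJ : MonIdeal J) :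
    ∀ v ∈ J, ∃ b ∈ MinBasis J, b ≤ v := by
  suffices h : ∀ d, ∀ v ∈ J, mdeg v ≤ d → ∃ b ∈ MinBasis J, b ≤ v by
    intro v hv; exact h (mdeg v) v hv le_rfl
  intro d
  induction d using Nat.strong_induction_on with
  | _ d ih =>
    intro v hv hd
    by_cases hmin : v ∈ MinBasis J
    · exact ⟨v, hmin, le_rfl⟩
    · simp only [MinBasis, Set.mem_setOf_eq, not_and] at hmin
      push_neg at hmin
      obtain ⟨w, hwJ, hwle, hwne⟩ := hmin hv
      have hlt : mdeg w < mdeg v := mdeg_lt_of_lt hwle hwne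
      obtain ⟨b, hb, hble⟩ := ih (mdeg w) (by omega) w hwJ le_rfl
      exact ⟨b, hb, hble.trans hwle⟩

/-- Key combinatorial lemma. -/
lemma key {n : ℕ} {𝔧 : Set (Mon (n + 1))} {m : ℕ}
    (hss : StronglyStable 𝔧)
    (hx1 : ∀ b ∈ MinBasis 𝔧, mdeg b = m + 1 → b 0 = 0)
    {u : Mon (n + 1)} (hu : u ∉ 𝔧) (hdeg : mdeg u = m) :
    u + Finsupp.single 0 1 ∉ 𝔧 := by
  intro h
  obtain ⟨b, hbmin, hble⟩ := exists_minBasis_le hss.1 _ h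
  have hble' : ∀ i, b i ≤ u i + (Finsupp.single (0 : Fin (n+1)) 1) i := by
    intro i; have := hble i; rwa [Finsupp.add_apply] at this
  have hs0 : (Finsupp.single (0 : Fin (n+1)) 1) 0 = 1 := by simp
  have hsne : ∀ i : Fin (n+1), i ≠ 0 → (Finsupp.single (0 : Fin (n+1)) 1) i = 0 := by
    intro i hi; simp [Finsupp.single_apply, Ne.symm hi]
  have hb0 : b 0 = u 0 + 1 := by
    by_contra hb0
    have h1 : b 0 ≤ u 0 := by have := hble' 0; rw [hs0] at this; omega
    have hbu : b ≤ u := by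
      intro i
      by_cases hi : i = 0
      · subst hi; exact h1
      · have := hble' i; rw [hsne i hi] at this; omega
    exact hu (upward hss.1 hbmin.1 hbu)
  have hbd : mdeg b ≤ m := by
    have h1 : mdeg b ≤ m + 1 := by
      have := mdeg_mono hble; rwa [mdeg_add, mdeg_single, hdeg] at this
    rcases Nat.lt_or_ge (mdeg b) (m+1) with h2 | h2
    · omega
    · exfalso
      have := hx1 b hbmin (le_antisymm h1 h2)
      omega
  obtain ⟨j, hj0, hjlt⟩ : ∃ j : Fin (n+1), j ≠ 0 ∧ b j < u j := by
    by_contra hc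
    push_neg at hc
    have hsum : mdeg u + 1 ≤ mdeg b := by
      rw [mdeg_eq_sum, mdeg_eq_sum]
      have : ∀ i ∈ Finset.univ (α := Fin (n+1)),
          u i + (Finsupp.single (0 : Fin (n+1)) 1) i ≤ b i := by
        intro i _
        by_cases hi : i = 0
        · subst hi; rw [hs0]; omega
        · rw [hsne i hi]; simpa using hc i hi
      have h2 := Finset.sum_le_sum this
      rw [Finset.sum_add_distrib] at h2
      have h3 : ∑ i, (Finsupp.single (0 : Fin (n+1)) 1) i = 1 := by
        rw [← mdeg_eq_sum, mdeg_single]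
      omega
    omega
  set b' : Mon (n+1) := b + Finsupp.single j 1 - Finsupp.single 0 1 with hb'
  have hsj : ∀ i : Fin (n+1), i ≠ j → (Finsupp.single j 1 : Mon (n+1)) i = 0 := by
    intro i hi; simp [Finsupp.single_apply, Ne.symm hi]
  have hsjj : (Finsupp.single j 1 : Mon (n+1)) j = 1 := by simp
  have hcancel : b + Finsupp.single j 1 = b' + Finsupp.single 0 1 := by
    rw [hb', tsub_add_cancel_of_le]
    intro i
    rw [Finsupp.add_apply]
    by_cases hi : i = 0
    · subst hi; rw [hs0, hb0]; omega
    · rw [hsne i hi]; omega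
  have hstep : BorelStep b b' := ⟨0, j, Fin.pos_of_ne_zero hj0, hcancel⟩
  have hb'J : b' ∈ 𝔧 := hss.2 b hbmin.1 b' (Relation.TransGen.single hstep)
  have hb'le : b' ≤ u := by
    intro i
    have happ : b' i = b i + (Finsupp.single j 1 : Mon (n+1)) i
        - (Finsupp.single (0 : Fin (n+1)) 1) i := by
      rw [hb', Finsupp.tsub_apply, Finsupp.add_apply]
    by_cases hi : i = 0
    · subst hi
      rw [happ, hs0, hsj 0 (Ne.symm hj0), hb0]; omega
    · rw [happ, hsne i hi]
      by_cases hij : i = j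
      · subst hij; rw [hsjj]; omega
      · rw [hsj i hij]
        have := hble' i; rw [hsne i hi] at this; omega
  exact hu (upward hss.1 hb'J hb'le)

section PolyAux
variable {n : ℕ} (K : Type) [Field K]

/-- Companion submodule to `spanNLE`. -/
noncomputable def redLE {N : ℕ} (𝔧 : Set (Mon N)) (t : ℕ) :
    Submodule K (MvPolynomial (Fin N) K) where
  carrier := {g | ∀ u ∈ g.support, u ∉ 𝔧 ∧ mdeg u ≤ t}
  zero_mem' := by simp
  add_mem' := by
    intro a b ha hb u hu
    rcases Finset.mem_union.mp (MvPolynomial.support_add hu) with h | h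
    · exact ha u h
    · exact hb u h
  smul_mem' := by
    intro c a ha u hu
    exact ha u (MvPolynomial.support_smul hu)

lemma support_mono {N : ℕ} (u : Mon N) : (mono K u).support = {u} := by
  classical
  rw [mono, MvPolynomial.support_monomial, if_neg (one_ne_zero)]

lemma spanNLE_eq_redLE {N : ℕ} (𝔧 : Set (Mon N)) (t : ℕ) :
    spanNLE K 𝔧 t = redLE K 𝔧 t := by
  apply le_antisymm
  · rw [spanNLE, Submodule.span_le]
    rintro g ⟨u, hu, rfl⟩
    intro v hv
    rw [support_mono, Finset.mem_singleton] at hv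
    subst hv; exact hu
  · intro g hg
    rw [spanNLE]
    nth_rewrite 1 [MvPolynomial.as_sum g]
    refine Submodule.sum_mem _ (fun u hu => ?_)
    have : (MvPolynomial.monomial u) (MvPolynomial.coeff u g)
        = (MvPolynomial.coeff u g) • mono K u := by
      rw [mono, MvPolynomial.smul_monomial, smul_eq_mul, mul_one]
    rw [this]
    exact Submodule.smul_mem _ _ (Submodule.subset_span ⟨u, hg u hu, rfl⟩)

lemma mem_spanNLE {N : ℕ} {𝔧 : Set (Mon N)} {t : ℕ} {g : MvPolynomial (Fin N) K} :
    g ∈ spanNLE K 𝔧 t ↔ ∀ u ∈ g.support, u ∉ 𝔧 ∧ mdeg u ≤ t := by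
  rw [spanNLE_eq_redLE]; exact Iff.rfl

lemma mem_degLE {N : ℕ} {t : ℕ} {g : MvPolynomial (Fin N) K} :
    g ∈ degLE K N t ↔ ∀ u ∈ g.support, mdeg u ≤ t := Iff.rfl

lemma spanNLE_mono {N : ℕ} (𝔧 : Set (Mon N)) {t t' : ℕ} (h : t ≤ t') :
    spanNLE K 𝔧 t ≤ spanNLE K 𝔧 t' := by
  rw [spanNLE_eq_redLE, spanNLE_eq_redLE]
  intro g hg u hu
  exact ⟨(hg u hu).1, le_trans (hg u hu).2 h⟩

lemma degLE_mono {N : ℕ} {t t' : ℕ} (h : t ≤ t') : degLE K N t ≤ degLE K N t' :=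
  fun g hg u hu => le_trans (hg u hu) h

lemma GleSub_mono {N : ℕ} (𝔧 : Set (Mon N)) (f : Mon N → MvPolynomial (Fin N) K)
    {t t' : ℕ} (h : t ≤ t') : GleSub K 𝔧 f t ≤ GleSub K 𝔧 f t' :=
  inf_le_inf_left _ (degLE_mono K h)

lemma totalDegree_mono_eq {N : ℕ} (u : Mon N) : (mono K u).totalDegree = mdeg u := by
  rw [mono, MvPolynomial.totalDegree_monomial _ (one_ne_zero)]; rfl

lemma mono_mem_degLE {N : ℕ} {u : Mon N} {t : ℕ} (h : mdeg u ≤ t) :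
    mono K u ∈ degLE K N t := by
  intro v hv
  rw [support_mono, Finset.mem_singleton] at hv
  subst hv; exact h

/-- Existence of decomposition. -/
lemma exists_decomp {𝔧 : Set (Mon (n+1))} {m : ℕ} {f : Mon (n+1) → MvPolynomial (Fin (n+1)) K}
    (hB : JmMarkedBasis K 𝔧 m f) {t : ℕ} (ht : m ≤ t)
    {g : MvPolynomial (Fin (n+1)) K} (hg : g ∈ degLE K (n+1) t) :
    ∃ s h, s ∈ spanNLE K 𝔧 t ∧ h ∈ GleSub K 𝔧 f t ∧ g = s + h := by
  rw [← (hB.2 t ht).2] at hg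
  obtain ⟨s, hs, h, hh, heq⟩ := Submodule.mem_sup.mp hg
  exact ⟨s, h, hs, hh, heq.symm⟩

/-- Uniqueness of decomposition. -/
lemma decomp_unique {𝔧 : Set (Mon (n+1))} {m : ℕ} {f : Mon (n+1) → MvPolynomial (Fin (n+1)) K}
    (hB : JmMarkedBasis K 𝔧 m f) {t : ℕ} (ht : m ≤ t)
    {s₁ h₁ s₂ h₂ : MvPolynomial (Fin (n+1)) K}
    (hs₁ : s₁ ∈ spanNLE K 𝔧 t) (hh₁ : h₁ ∈ GleSub K 𝔧 f t)
    (hs₂ : s₂ ∈ spanNLE K 𝔧 t) (hh₂ : h₂ ∈ GleSub K 𝔧 f t)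
    (heq : s₁ + h₁ = s₂ + h₂) : s₁ = s₂ := by
  have hd := (hB.2 t ht).1
  have h1 : s₁ - s₂ ∈ spanNLE K 𝔧 t := Submodule.sub_mem _ hs₁ hs₂
  have h2 : s₁ - s₂ ∈ GleSub K 𝔧 f t := by
    have : s₁ - s₂ = h₂ - h₁ := by linear_combination heq
    rw [this]; exact Submodule.sub_mem _ hh₂ hh₁
  have h3 := hd.le_bot (Submodule.mem_inf.mpr ⟨h1, h2⟩)
  rw [Submodule.mem_bot] at h3
  exact sub_eq_zero.mp h3

end PolyAux

lemma nf_deg_le {n : ℕ} (K : Type) [Field K] {𝔧 : Set (Mon (n+1))} {m : ℕ}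
    {f : Mon (n+1) → MvPolynomial (Fin (n+1)) K}
    (hss : StronglyStable 𝔧) (hm : 0 < m)
    (hx1 : ∀ b ∈ MinBasis 𝔧, mdeg b = m + 1 → b 0 = 0)
    (hB : JmMarkedBasis K 𝔧 m f) (β : Mon (n+1)) (g' : MvPolynomial (Fin (n+1)) K)
    (hrf : IsReducedForm K 𝔧 m f (mono K β) g') :
    ∀ u ∈ g'.support, mdeg u ≤ max (m - 1) (mdeg β) := by
  classical
  obtain ⟨hsupp, hmem⟩ := hrf
  intro u hu
  have htd : (mono K β).totalDegree = mdeg β := totalDegree_mono_eq K β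
  rcases le_or_gt m (mdeg β) with hβ | hβ
  · have h1 := (hsupp u hu).2
    rw [htd, max_eq_right hβ] at h1
    exact le_trans h1 (le_max_right _ _)
  · refine le_trans ?_ (le_max_left _ _)
    by_contra hcon
    push_neg at hcon
    have hudeg : ∀ v ∈ g'.support, v ∉ 𝔧 ∧ mdeg v ≤ m := by
      intro v hv
      refine ⟨(hsupp v hv).1, ?_⟩
      have h2 := (hsupp v hv).2
      rwa [htd, max_eq_left (le_of_lt hβ)] at h2
    have hum : mdeg u = m := by have := (hudeg u hu).2; omega
    set p : MvPolynomial (Fin (n+1)) K :=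
      ∑ v ∈ g'.support.filter (fun v => mdeg v = m),
        MvPolynomial.monomial v (MvPolynomial.coeff v g') with hp
    have hcoeffp : ∀ v, MvPolynomial.coeff v p
        = if mdeg v = m then MvPolynomial.coeff v g' else 0 := by
      intro v
      rw [hp, MvPolynomial.coeff_sum]
      simp only [MvPolynomial.coeff_monomial]
      rw [Finset.sum_ite_eq' _ v (fun v => MvPolynomial.coeff v g')]
      by_cases hvs : v ∈ Finset.filter (fun v => mdeg v = m) g'.support
      · have h1 := Finset.mem_filter.mp hvs
        rw [if_pos hvs, if_pos h1.2]
      · rw [if_neg hvs]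
        by_cases hvm : mdeg v = m
        · rw [if_pos hvm]
          by_cases hvg : v ∈ g'.support
          · exact absurd (Finset.mem_filter.mpr ⟨hvg, hvm⟩) hvs
          · exact (MvPolynomial.notMem_support_iff.mp hvg).symm
        · rw [if_neg hvm]
    set q : MvPolynomial (Fin (n+1)) K := g' - p with hq
    have hpq : p + q = g' := by rw [hq]; ring
    have hsuppq : ∀ v ∈ q.support, v ∉ 𝔧 ∧ mdeg v ≤ m - 1 := by
      intro v hv
      rw [MvPolynomial.mem_support_iff] at hv
      have hcq : MvPolynomial.coeff v q
          = MvPolynomial.coeff v g' - MvPolynomial.coeff v p := by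
        rw [hq, MvPolynomial.coeff_sub]
      by_cases hvm : mdeg v = m
      · exfalso; rw [hcq, hcoeffp v, if_pos hvm, sub_self] at hv; exact hv rfl
      · have hvg : v ∈ g'.support := by
          rw [hcq, hcoeffp v, if_neg hvm, sub_zero] at hv
          exact MvPolynomial.mem_support_iff.mpr hv
        exact ⟨(hudeg v hvg).1, by have := (hudeg v hvg).2; omega⟩
    have hsuppp : ∀ v ∈ p.support, v ∉ 𝔧 ∧ mdeg v = m := by
      intro v hv
      rw [MvPolynomial.mem_support_iff, hcoeffp v] at hv
      by_cases hvm : mdeg v = m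
      · rw [if_pos hvm] at hv
        exact ⟨(hudeg v (MvPolynomial.mem_support_iff.mpr hv)).1, hvm⟩
      · rw [if_neg hvm] at hv; exact absurd rfl hv
    have hXq : MvPolynomial.X 0 * q ∈ degLE K (n+1) m := by
      intro w hw
      rw [MvPolynomial.support_X_mul, Finset.mem_map] at hw
      obtain ⟨v, hv, rfl⟩ := hw
      simp only [addLeftEmbedding_apply]
      rw [mdeg_add, mdeg_single]
      have := (hsuppq v hv).2
      omega
    obtain ⟨s', h', hs', hh', heq'⟩ := exists_decomp K hB le_rfl hXq
    have hβ1 : mdeg (β + Finsupp.single 0 1) ≤ m := by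
      rw [mdeg_add, mdeg_single]; omega
    obtain ⟨w, h₂, hw, hh₂, heqw⟩ := exists_decomp K hB le_rfl (mono_mem_degLE K hβ1)
    have hXp : MvPolynomial.X 0 * p ∈ spanNLE K 𝔧 (m+1) := by
      rw [mem_spanNLE]
      intro w' hw'
      rw [MvPolynomial.support_X_mul, Finset.mem_map] at hw'
      obtain ⟨v, hv, rfl⟩ := hw'
      simp only [addLeftEmbedding_apply]
      obtain ⟨hv1, hv2⟩ := hsuppp v hv
      constructor
      · have hk := key hss hx1 hv1 hv2
        rwa [add_comm v (Finsupp.single 0 1)] at hk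
      · rw [mdeg_add, mdeg_single, hv2]; omega
    have hXβ : MvPolynomial.X (0 : Fin (n+1)) * mono K β
        = mono K (β + Finsupp.single 0 1) := by
      rw [mono, mono, add_comm β, MvPolynomial.monomial_single_add (e := 1), pow_one]
    have hs₂ : MvPolynomial.X 0 * p + s' ∈ spanNLE K 𝔧 (m+1) :=
      Submodule.add_mem _ hXp (spanNLE_mono K 𝔧 (Nat.le_succ m) hs')
    have hideal : MvPolynomial.X 0 * (mono K β - g') ∈ idealG K 𝔧 f :=
      Ideal.mul_mem_left _ _ hmem
    have hdeg3 : MvPolynomial.X 0 * (mono K β - g') ∈ degLE K (n+1) (m+1) := by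
      intro w' hw'
      rw [MvPolynomial.support_X_mul, Finset.mem_map] at hw'
      obtain ⟨v, hv, rfl⟩ := hw'
      simp only [addLeftEmbedding_apply]
      rw [mdeg_add, mdeg_single]
      have hv' : v ∈ (mono K β).support ∪ g'.support :=
        MvPolynomial.support_sub _ _ _ hv
      rcases Finset.mem_union.mp hv' with h | h
      · rw [support_mono, Finset.mem_singleton] at h
        subst h; omega
      · have := (hudeg v h).2; omega
    have hh₃ : h' + MvPolynomial.X 0 * (mono K β - g') ∈ GleSub K 𝔧 f (m+1) := by
      refine Submodule.add_mem _ (GleSub_mono K 𝔧 f (Nat.le_succ m) hh') ?_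
      exact Submodule.mem_inf.mpr ⟨hideal, hdeg3⟩
    have hgpq : MvPolynomial.X (0 : Fin (n+1)) * g'
        = MvPolynomial.X 0 * p + MvPolynomial.X 0 * q := by
      rw [← mul_add, hpq]
    have heqdec : mono K (β + Finsupp.single 0 1)
        = (MvPolynomial.X 0 * p + s') + (h' + MvPolynomial.X 0 * (mono K β - g')) := by
      rw [← hXβ]
      linear_combination hgpq + heq'
    have hweq : w = MvPolynomial.X 0 * p + s' :=
      decomp_unique K hB (Nat.le_succ m)
        (spanNLE_mono K 𝔧 (Nat.le_succ m) hw) (GleSub_mono K 𝔧 f (Nat.le_succ m) hh₂)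
        hs₂ hh₃ (heqw.symm.trans heqdec)
    have hc1 : MvPolynomial.coeff (Finsupp.single 0 1 + u) (MvPolynomial.X 0 * p)
        = MvPolynomial.coeff u p := MvPolynomial.coeff_X_mul u 0 p
    have hcu : MvPolynomial.coeff u p = MvPolynomial.coeff u g' := by
      rw [hcoeffp u, if_pos hum]
    have hne : MvPolynomial.coeff u g' ≠ 0 := MvPolynomial.mem_support_iff.mp hu
    have hdeguu : mdeg (Finsupp.single (0 : Fin (n+1)) 1 + u) = 1 + m := by
      rw [mdeg_add, mdeg_single, hum]
    have hnotw : MvPolynomial.coeff (Finsupp.single 0 1 + u) w = 0 := by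
      by_contra hc
      have := ((mem_spanNLE K).mp hw _ (MvPolynomial.mem_support_iff.mpr hc)).2
      omega
    have hnots : MvPolynomial.coeff (Finsupp.single 0 1 + u) s' = 0 := by
      by_contra hc
      have := ((mem_spanNLE K).mp hs' _ (MvPolynomial.mem_support_iff.mpr hc)).2
      omega
    have hz := congrArg (MvPolynomial.coeff (Finsupp.single 0 1 + u)) hweq
    rw [MvPolynomial.coeff_add, hc1, hcu, hnotw, hnots, add_zero] at hz
    exact hne hz.symm


/-- if no minimal generator of `𝔧` of degree `m+1` is divisible
by the smallest variable `x_1`, then the normal forms of monomials modulo a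
`[𝔧,m]`-marked basis have degree `≤ max{m-1, |β|}`, and a `[𝔧,m]`-marked set
is a `[𝔧,m]`-marked basis iff it is a `[𝔧,m-1]`-marked basis.
(Here `R = K[x_1,…,x_{n+1}]` and `x_1` is the variable of index `0`.) -/
theorem markedBasis_drop_degree {n : ℕ} (K : Type) [Field K]
    (𝔧 : Set (Mon (n + 1))) (m : ℕ) (f : Mon (n + 1) → MvPolynomial (Fin (n + 1)) K)
    (hss : StronglyStable 𝔧) (hm : 0 < m)
    (hx1 : ∀ b ∈ MinBasis 𝔧, mdeg b = m + 1 → b 0 = 0) :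
    (JmMarkedBasis K 𝔧 m f →
      ∀ (β : Mon (n + 1)) (g' : MvPolynomial (Fin (n + 1)) K),
        IsReducedForm K 𝔧 m f (mono K β) g' →
        ∀ u ∈ g'.support, mdeg u ≤ max (m - 1) (mdeg β)) ∧
    (JmMarkedSet K 𝔧 m f →
      (JmMarkedBasis K 𝔧 m f ↔ JmMarkedBasis K 𝔧 (m - 1) f)) := by
  classical
  constructor
  · intro hB β g' hrf
    exact nf_deg_le K hss hm hx1 hB β g' hrf
  · intro hset
    constructor
    · intro hB
      constructor
      · -- JmMarkedSet (m-1)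
        intro α hα
        obtain ⟨hc1, hc2⟩ := hB.1 α hα
        refine ⟨hc1, ?_⟩
        intro u hu hune
        refine ⟨(hc2 u hu hune).1, ?_⟩
        have hrf : IsReducedForm K 𝔧 m f (mono K α) (mono K α - f α) := by
          constructor
          · intro v hv
            have hv' : v ∈ (f α).support ∧ v ≠ α := by
              by_cases hva : v = α
              · subst hva
                exfalso
                rw [MvPolynomial.mem_support_iff, MvPolynomial.coeff_sub, mono,
                  MvPolynomial.coeff_monomial, if_pos rfl, hc1, sub_self] at hv
                exact hv rfl
              · refine ⟨?_, hva⟩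
                rw [MvPolynomial.mem_support_iff, MvPolynomial.coeff_sub, mono,
                  MvPolynomial.coeff_monomial, if_neg (fun h => hva h.symm), zero_sub,
                  neg_ne_zero] at hv
                exact MvPolynomial.mem_support_iff.mpr hv
            obtain ⟨hv1, hv2⟩ := hv'
            have h3 := hc2 v hv1 hv2
            refine ⟨h3.1, ?_⟩
            rw [totalDegree_mono_eq]
            exact h3.2
          · have h4 : mono K α - (mono K α - f α) = f α := by ring
            rw [h4]
            exact Ideal.subset_span ⟨α, hα, rfl⟩
        have hnf := nf_deg_le K hss hm hx1 hB α (mono K α - f α) hrf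
        have husupp : u ∈ (mono K α - f α).support := by
          rw [MvPolynomial.mem_support_iff, MvPolynomial.coeff_sub, mono,
            MvPolynomial.coeff_monomial, if_neg (fun h => hune h.symm), zero_sub,
            neg_ne_zero]
          exact MvPolynomial.mem_support_iff.mp hu
        exact hnf u husupp
      · intro t ht
        rcases le_or_gt m t with hmt | hmt
        · exact hB.2 t hmt
        · have htm : t = m - 1 := by omega
          subst htm
          constructor
          · exact ((hB.2 m le_rfl).1).mono (spanNLE_mono K 𝔧 (Nat.sub_le m 1))
              (GleSub_mono K 𝔧 f (Nat.sub_le m 1))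
          · apply le_antisymm
            · refine sup_le ?_ inf_le_right
              rw [spanNLE_eq_redLE]
              intro g hg u hu
              exact (hg u hu).2
            · intro g hg
              have hmono : ∀ β : Mon (n+1), mdeg β ≤ m - 1 →
                  mono K β ∈ spanNLE K 𝔧 (m-1) ⊔ GleSub K 𝔧 f (m-1) := by
                intro β hβ
                have hβm : mdeg β ≤ m := le_trans hβ (Nat.sub_le m 1)
                obtain ⟨s, h, hs, hh, heq⟩ :=
                  exists_decomp K hB le_rfl (mono_mem_degLE K hβm)
                have hrf : IsReducedForm K 𝔧 m f (mono K β) s := by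
                  constructor
                  · intro v hv
                    have h5 := (mem_spanNLE K).mp hs v hv
                    exact ⟨h5.1, le_trans h5.2 (le_max_left _ _)⟩
                  · have h6 : mono K β - s = h := by linear_combination heq
                    rw [h6]
                    exact (Submodule.mem_inf.mp hh).1
                have hds := nf_deg_le K hss hm hx1 hB β s hrf
                have hsmem : s ∈ spanNLE K 𝔧 (m-1) := by
                  rw [mem_spanNLE]
                  intro v hv
                  refine ⟨((mem_spanNLE K).mp hs v hv).1, ?_⟩
                  have h7 := hds v hv
                  rwa [max_eq_left hβ] at h7
                have hhmem : h ∈ GleSub K 𝔧 f (m-1) := by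
                  refine Submodule.mem_inf.mpr ⟨(Submodule.mem_inf.mp hh).1, ?_⟩
                  have heqh : h = mono K β - s := by linear_combination -heq
                  rw [heqh]
                  intro v hv
                  have hv' := MvPolynomial.support_sub _ _ _ hv
                  rcases Finset.mem_union.mp hv' with h1 | h1
                  · rw [support_mono, Finset.mem_singleton] at h1; subst h1; exact hβ
                  · exact ((mem_spanNLE K).mp hsmem v h1).2
                exact Submodule.mem_sup.mpr ⟨s, hsmem, h, hhmem, heq.symm⟩
              have hgs : g = ∑ v ∈ g.support, MvPolynomial.coeff v g • mono K v := by
                nth_rewrite 1 [MvPolynomial.as_sum g]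
                refine Finset.sum_congr rfl (fun v _ => ?_)
                rw [mono, MvPolynomial.smul_monomial, smul_eq_mul, mul_one]
              rw [hgs]
              exact Submodule.sum_mem _
                (fun v hv => Submodule.smul_mem _ _ (hmono v (hg v hv)))
    · intro hB'
      exact ⟨hset, fun t ht => hB'.2 t (le_trans (Nat.sub_le m 1) ht)⟩

end Paper
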